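/- Let K be a field, n ≥ 1, and V a linear subspace of M_n(K) with codimension strictly less than n-1. Then M_n(K) is spanned as a K-vector space by the set of products {AB : A ∈ V, B ∈ V}. -/

import Mathlib

open Module LinearMap Matrix

section helpers

variable {K : Type*} [Field K]
variable {E : Type*} [AddCommGroup E] [Module K E] [FiniteDimensional K E]
variable {F : Type*} [AddCommGroup F] [Module K F] [FiniteDimensional K F]

lemma perp_finrank (b : E →ₗ[K] Module.Dual K E) (hb : Function.Injective b)
    (W : Submodule K E) :
    finrank K (LinearMap.ker (W.dualRestrict.comp b)) + finrank K W = finrank K E := by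
  have hbsurj : Function.Surjective b := by
    rw [← LinearMap.range_eq_top]
    apply Submodule.eq_top_of_finrank_eq
    rw [LinearMap.finrank_range_of_inj hb, Subspace.dual_finrank_eq]
  have hsurj : Function.Surjective (W.dualRestrict.comp b) :=
    (Subspace.dualRestrict_surjective (W := W)).comp hbsurj
  have h := LinearMap.finrank_range_add_finrank_ker (W.dualRestrict.comp b)
  rw [LinearMap.range_eq_top.mpr hsurj, finrank_top, Subspace.dual_finrank_eq] at h
  omega

set_option linter.unusedSectionVars false

lemma mem_perp_iff (b : E →ₗ[K] Module.Dual K E) (W : Submodule K E) (v : E) :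
    v ∈ LinearMap.ker (W.dualRestrict.comp b) ↔ ∀ w ∈ W, b v w = 0 := by
  simp only [LinearMap.mem_ker, LinearMap.comp_apply]
  constructor
  · intro h w hw
    have := congrArg (fun f => f ⟨w, hw⟩) h
    simpa using this
  · intro h
    ext ⟨w, hw⟩
    simpa using h w hw

lemma finrank_comap_le (f : E →ₗ[K] F) (p : Submodule K F) :
    finrank K (p.comap f) ≤ finrank K (LinearMap.ker f) + finrank K p := by
  have h1 := LinearMap.finrank_range_add_finrank_ker (f.domRestrict (p.comap f))
  have h2 : LinearMap.range (f.domRestrict (p.comap f)) ≤ p := by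
    rintro _ ⟨⟨a, ha⟩, rfl⟩
    exact ha
  have h3 : finrank K (LinearMap.ker (f.domRestrict (p.comap f))) ≤
      finrank K (LinearMap.ker f) := by
    let j : LinearMap.ker (f.domRestrict (p.comap f)) →ₗ[K] LinearMap.ker f :=
      LinearMap.codRestrict (LinearMap.ker f)
        ((p.comap f).subtype.comp (LinearMap.ker (f.domRestrict (p.comap f))).subtype)
        (fun z => z.2)
    have hj : Function.Injective j := by
      intro a b hab
      have := congrArg (Subtype.val) hab
      exact Subtype.ext (Subtype.ext this)
    exact LinearMap.finrank_le_finrank_of_injective hj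
  have h4 := Submodule.finrank_mono h2
  omega

lemma finrank_le_map_add_ker (f : E →ₗ[K] F) (p : Submodule K E) :
    finrank K p ≤ finrank K (p.map f) + finrank K (LinearMap.ker f) := by
  have h := finrank_comap_le f (p.map f)
  have h2 : p ≤ (p.map f).comap f := Submodule.le_comap_map f p
  have := Submodule.finrank_mono h2
  omega

lemma finrank_ker_add_le (f : E →ₗ[K] F) {Z : Submodule K F} (hZ : Z ≤ LinearMap.range f) :
    finrank K (LinearMap.ker f) + finrank K Z ≤ finrank K E := by
  have h := LinearMap.finrank_range_add_finrank_ker f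
  have := Submodule.finrank_mono hZ
  omega

end helpers

section matrixhelpers

variable {K : Type*} [Field K] {n : ℕ}

lemma trace_mul_std (A : Matrix (Fin n) (Fin n) K) (i j : Fin n) :
    (A * Matrix.single j i (1 : K)).trace = A i j := by
  rw [Matrix.trace]
  simp [Matrix.diag, Matrix.mul_apply, Matrix.single, Matrix.of_apply,
    Finset.sum_ite_eq, ite_and]

lemma vecMulVec_mulVec' (a b v : Fin n → K) :
    (Matrix.vecMulVec a b) *ᵥ v = (b ⬝ᵥ v) • a := by
  funext i
  simp [Matrix.mulVec, Matrix.vecMulVec_apply, dotProduct, Finset.mul_sum,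
    mul_comm, mul_left_comm]

lemma vecMul_vecMulVec' (a b v : Fin n → K) :
    v ᵥ* (Matrix.vecMulVec a b) = (v ⬝ᵥ a) • b := by
  funext i
  simp only [Matrix.vecMul, Matrix.vecMulVec_apply, dotProduct, Pi.smul_apply,
    smul_eq_mul, Finset.sum_mul]
  exact Finset.sum_congr rfl fun k _ => by ring

noncomputable def btr : Matrix (Fin n) (Fin n) K →ₗ[K] Module.Dual K (Matrix (Fin n) (Fin n) K) :=
  LinearMap.mk₂ K (fun A B => (A * B).trace)
    (fun A A' B => by simp [add_mul])
    (fun c A B => by simp [smul_mul_assoc])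
    (fun A B B' => by simp [mul_add])
    (fun c A B => by simp [mul_smul_comm])

noncomputable def bdot : (Fin n → K) →ₗ[K] Module.Dual K (Fin n → K) :=
  LinearMap.mk₂ K (fun v w => v ⬝ᵥ w)
    (fun v v' w => add_dotProduct v v' w)
    (fun c v w => smul_dotProduct c v w)
    (fun v w w' => dotProduct_add v w w')
    (fun c v w => dotProduct_smul c v w)

lemma mul_apply_col (Cc M : Matrix (Fin n) (Fin n) K) (a j : Fin n) :
    (Cc * M) a j = (Cc *ᵥ (fun i => M i j)) a := by
  simp [Matrix.mul_apply, Matrix.mulVec, dotProduct]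

lemma btr_inj : Function.Injective (btr (K := K) (n := n)) := by
  rw [← LinearMap.ker_eq_bot, Submodule.eq_bot_iff]
  intro A hA
  rw [LinearMap.mem_ker] at hA
  ext i j
  have : btr A (Matrix.single j i (1:K)) = 0 := by rw [hA]; rfl
  simpa [btr, LinearMap.mk₂_apply, trace_mul_std] using this

lemma bdot_inj : Function.Injective (bdot (K := K) (n := n)) := by
  rw [← LinearMap.ker_eq_bot, Submodule.eq_bot_iff]
  intro v hv
  rw [LinearMap.mem_ker] at hv
  funext i
  have : bdot v (Pi.single i (1:K)) = 0 := by rw [hv]; rfl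
  simpa [bdot, LinearMap.mk₂_apply] using this

/-- evaluation A ↦ A *ᵥ x as a linear map in A -/
noncomputable def evR (x : Fin n → K) : Matrix (Fin n) (Fin n) K →ₗ[K] (Fin n → K) where
  toFun A := A *ᵥ x
  map_add' A B := Matrix.add_mulVec A B x
  map_smul' c A := Matrix.smul_mulVec c A x

/-- evaluation A ↦ y ᵥ* A as a linear map in A -/
noncomputable def evL (y : Fin n → K) : Matrix (Fin n) (Fin n) K →ₗ[K] (Fin n → K) where
  toFun A := y ᵥ* A
  map_add' A B := Matrix.vecMul_add A B y
  map_smul' c A := by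
    funext j
    simp only [Matrix.vecMul, dotProduct, Matrix.smul_apply, RingHom.id_apply,
      Pi.smul_apply, smul_eq_mul, Finset.mul_sum]
    exact Finset.sum_congr rfl fun k _ => by ring

@[simp] lemma evR_apply (x : Fin n → K) (A : Matrix (Fin n) (Fin n) K) : evR x A = A *ᵥ x := rfl

@[simp] lemma evL_apply (y : Fin n → K) (A : Matrix (Fin n) (Fin n) K) : evL y A = y ᵥ* A := rfl

end matrixhelpers

set_option maxHeartbeats 1000000 in
theorem span_products_eq_top (K : Type*) [Field K] (n : ℕ) (hn : 0 < n)
    (V : Submodule K (Matrix (Fin n) (Fin n) K))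
    (hV : n ^ 2 - Module.finrank K V < n - 1) :
    Submodule.span K {M : Matrix (Fin n) (Fin n) K | ∃ A ∈ V, ∃ B ∈ V, M = A * B} = ⊤ := by
  classical
  by_contra hW
  have hNdim : finrank K (Matrix (Fin n) (Fin n) K) = n ^ 2 := by
    rw [Module.finrank_matrix]
    simp [sq]
  -- a nonzero functional vanishing on all products
  obtain ⟨f, hf0, hfmap⟩ :=
    Submodule.exists_dual_map_eq_bot_of_lt_top
      (p := Submodule.span K {M : Matrix (Fin n) (Fin n) K | ∃ A ∈ V, ∃ B ∈ V, M = A * B})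
      (lt_top_iff_ne_top.mpr hW) inferInstance
  have hfprod : ∀ A ∈ V, ∀ B ∈ V, f (A * B) = 0 := by
    intro A hA B hB
    have hmem : A * B ∈ Submodule.span K
        {M : Matrix (Fin n) (Fin n) K | ∃ A ∈ V, ∃ B ∈ V, M = A * B} :=
      Submodule.subset_span ⟨A, hA, B, hB, rfl⟩
    have := Submodule.mem_map_of_mem (f := f) hmem
    rwa [hfmap, Submodule.mem_bot] at this
  -- represent f by a matrix C
  set C : Matrix (Fin n) (Fin n) K :=
    Matrix.of (fun i j => f (Matrix.single j i 1)) with hCdef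
  have hfC : ∀ X : Matrix (Fin n) (Fin n) K, f X = (C * X).trace := by
    intro X
    calc f X = f (∑ i, ∑ j, Matrix.single i j (X i j)) := by
              rw [← Matrix.matrix_eq_sum_single X]
    _ = ∑ i, ∑ j, X i j * f (Matrix.single i j 1) := by
        rw [map_sum]
        refine Finset.sum_congr rfl fun i _ => ?_
        rw [map_sum]
        refine Finset.sum_congr rfl fun j _ => ?_
        have h1 : Matrix.single i j (X i j) = (X i j) • Matrix.single i j (1:K) := by
          rw [Matrix.smul_single, smul_eq_mul, mul_one]
        rw [h1, _root_.map_smul, smul_eq_mul]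
    _ = (C * X).trace := by
        rw [Matrix.trace]
        simp only [Matrix.diag, Matrix.mul_apply]
        rw [Finset.sum_comm]
        refine Finset.sum_congr rfl fun i _ => Finset.sum_congr rfl fun j _ => ?_
        rw [hCdef]
        simp [mul_comm]
  have hCAB : ∀ A ∈ V, ∀ B ∈ V, (C * (A * B)).trace = 0 := by
    intro A hA B hB
    rw [← hfC]
    exact hfprod A hA B hB
  have hC0 : C ≠ 0 := by
    intro h
    apply hf0
    ext X
    rw [hfC, h, zero_mul]
    simp
  -- V-perp
  set Vperp := LinearMap.ker (V.dualRestrict.comp btr) with hVperpdef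
  have hVperp_dim : finrank K Vperp + finrank K V = n ^ 2 := by
    rw [← hNdim]; exact perp_finrank (K := K) (E := Matrix (Fin n) (Fin n) K) btr btr_inj V
  -- left multiplication by C maps V into Vperp
  set ψ : Matrix (Fin n) (Fin n) K →ₗ[K] Matrix (Fin n) (Fin n) K :=
    LinearMap.mulLeft K C with hψdef
  have hψV : Submodule.map ψ V ≤ Vperp := by
    rintro _ ⟨A, hA, rfl⟩
    rw [hVperpdef, mem_perp_iff (K := K) (E := Matrix (Fin n) (Fin n) K)]
    intro B hB
    show (ψ A * B).trace = 0
    rw [hψdef]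
    show ((C * A) * B).trace = 0
    rw [mul_assoc]
    exact hCAB A hA B hB
  -- kernel of ψ
  set k : ℕ := finrank K (LinearMap.ker C.mulVecLin) with hkdef
  set r : ℕ := finrank K (LinearMap.range C.mulVecLin) with hrdef
  have hkr : r + k = n := by
    have := LinearMap.finrank_range_add_finrank_ker C.mulVecLin
    rwa [Module.finrank_pi, Fintype.card_fin] at this
  have hkerψ : finrank K (LinearMap.ker ψ) = n * k := by
    have eqv : (LinearMap.ker ψ) ≃ₗ[K] (Fin n → LinearMap.ker C.mulVecLin) :=
      { toFun := fun X j => ⟨fun i => (X : Matrix (Fin n) (Fin n) K) i j, by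
          rw [LinearMap.mem_ker]
          have hX : C * (X : Matrix (Fin n) (Fin n) K) = 0 := X.2
          funext a
          rw [Matrix.mulVecLin_apply, ← mul_apply_col, hX]
          rfl⟩
        map_add' := by intro X Y; funext j; ext i; rfl
        map_smul' := by intro c X; funext j; ext i; rfl
        invFun := fun g => ⟨Matrix.of (fun i j => ((g j : Fin n → K)) i), by
          rw [LinearMap.mem_ker]
          show C * _ = 0
          ext a j
          have hg : C.mulVecLin (g j : Fin n → K) = 0 := (g j).2
          rw [mul_apply_col]
          show (C *ᵥ (g j : Fin n → K)) a = 0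
          rw [← Matrix.mulVecLin_apply, hg]
          rfl⟩
        left_inv := by intro X; ext i j; rfl
        right_inv := by intro g; funext j; ext i; rfl }
    rw [eqv.finrank_eq, Module.finrank_pi_fintype, Finset.sum_const, Finset.card_univ,
      Fintype.card_fin, smul_eq_mul, hkdef]
  -- r = 1
  have hr1 : r = 1 := by
    have hrpos : 1 ≤ r := by
      rcases Nat.eq_zero_or_pos r with h | h
      · exfalso
        rw [hrdef, Submodule.finrank_eq_zero] at h
        apply hC0
        ext i j
        have h2 : C.mulVecLin (Pi.single j 1) = 0 := by
          have : C.mulVecLin (Pi.single j 1) ∈ LinearMap.range C.mulVecLin :=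
            LinearMap.mem_range_self _ _
          rw [h] at this
          simpa using this
        have := congrFun h2 i
        simpa [Matrix.mulVecLin_apply] using this
      · exact h
    by_contra hne
    have hr2 : 2 ≤ r := by omega
    -- dimension count
    have hmapV : finrank K (Submodule.map ψ V) ≤ finrank K Vperp := Submodule.finrank_mono hψV
    have hVbound := finrank_le_map_add_ker ψ V
    have hVle : finrank K V ≤ n ^ 2 := by
      rw [← hNdim]; exact Submodule.finrank_le V
    have hprod : n * k + n * r = n * n := by
      rw [← Nat.mul_add, Nat.add_comm k r, hkr]
    have h2n : 2 * n ≤ n * r := by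
      calc 2 * n ≤ r * n := Nat.mul_le_mul_right n hr2
      _ = n * r := Nat.mul_comm r n
    have hsq : n ^ 2 = n * n := sq n
    rw [hkerψ] at hVbound
    -- linear arithmetic
    set a := n * k with ha
    set b := n * r with hb
    set m := n * n with hm
    clear_value a b m
    omega
  -- extract x, y with C = x ⬝ yᵀ
  rw [hrdef] at hr1
  obtain ⟨v, hv0, hvspan⟩ :=
    (finrank_eq_one_iff' (K := K) (V := ↥(LinearMap.range C.mulVecLin))).mp hr1
  -- construct x and y with C i j = x i * y j
  set x : Fin n → K := (v : Fin n → K) with hxdef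
  have hx0 : x ≠ 0 := fun h => hv0 (Subtype.ext h)
  have hy' : ∀ j : Fin n, ∃ c : K, c • x = C.mulVecLin (Pi.single j 1) := by
    intro j
    obtain ⟨c, hc⟩ := hvspan ⟨C.mulVecLin (Pi.single j 1), LinearMap.mem_range_self _ _⟩
    exact ⟨c, by simpa [hxdef] using congrArg Subtype.val hc⟩
  choose y hy using hy'
  have hCxy : ∀ i j, C i j = x i * y j := by
    intro i j
    have h1 := congrFun (hy j) i
    rw [Matrix.mulVecLin_apply, Matrix.mulVec_single_one] at h1
    simp only [Pi.smul_apply, smul_eq_mul, mul_one, Matrix.col_apply] at h1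
    rw [← h1]; ring
  have hy0 : y ≠ 0 := by
    intro h
    apply hC0
    ext i j
    rw [hCxy i j, h]
    simp
  -- trace formula
  have htr2 : ∀ M : Matrix (Fin n) (Fin n) K, (C * M).trace = y ⬝ᵥ (M *ᵥ x) := by
    intro M
    rw [Matrix.trace]
    simp only [Matrix.diag, Matrix.mul_apply, dotProduct, Matrix.mulVec,
      Finset.mul_sum]
    rw [Finset.sum_comm]
    refine Finset.sum_congr rfl fun i _ => Finset.sum_congr rfl fun j _ => ?_
    rw [hCxy]
    ring
  have hdot : ∀ A ∈ V, ∀ B ∈ V, (y ᵥ* A) ⬝ᵥ (B *ᵥ x) = 0 := by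
    intro A hA B hB
    have h1 := hCAB A hA B hB
    rw [htr2, ← Matrix.mulVec_mulVec, Matrix.dotProduct_mulVec] at h1
    exact h1
  -- the subspaces L and R
  set L := Submodule.map (evR x) V with hLdef
  set R := Submodule.map (evL y) V with hRdef
  set Lperp := LinearMap.ker (L.dualRestrict.comp bdot) with hLperpdef
  have hLperp_dim : finrank K Lperp + finrank K L = n := by
    have := perp_finrank (K := K) (E := Fin n → K) bdot bdot_inj L
    rwa [Module.finrank_pi, Fintype.card_fin] at this
  have hRLperp : R ≤ Lperp := by
    rintro _ ⟨A, hA, rfl⟩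
    rw [hLperpdef, mem_perp_iff (K := K) (E := Fin n → K)]
    rintro _ ⟨B, hB, rfl⟩
    show (evL y A) ⬝ᵥ (evR x B) = 0
    rw [evL_apply, evR_apply]
    exact hdot A hA B hB
  have hed : finrank K R + finrank K L ≤ n := by
    have := Submodule.finrank_mono hRLperp
    omega
  -- the map Φ
  set Φ : Matrix (Fin n) (Fin n) K →ₗ[K] (Fin n → K) × (Fin n → K) :=
    (evR x).prod (evL y) with hΦdef
  have hVT : V ≤ Submodule.comap Φ (L.prod R) := by
    intro A hA
    rw [Submodule.mem_comap]
    exact ⟨Submodule.mem_map_of_mem hA, Submodule.mem_map_of_mem hA⟩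
  have hVleT := Submodule.finrank_mono hVT
  have hT := finrank_comap_le (K := K) (E := Matrix (Fin n) (Fin n) K)
    (F := (Fin n → K) × (Fin n → K)) Φ (L.prod R)
  have hprodLR : finrank K (L.prod R) ≤ finrank K L + finrank K R := by
    rw [LinearMap.prod_eq_sup_map]
    have h1 := Submodule.finrank_sup_add_finrank_inf_eq
      (L.map (LinearMap.inl K (Fin n → K) (Fin n → K)))
      (R.map (LinearMap.inr K (Fin n → K) (Fin n → K)))
    have h2 := Submodule.finrank_map_le (LinearMap.inl K (Fin n → K) (Fin n → K)) L
    have h3 := Submodule.finrank_map_le (LinearMap.inr K (Fin n → K) (Fin n → K)) R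
    omega
  -- the functional ℓ on pairs
  set ℓ : ((Fin n → K) × (Fin n → K)) →ₗ[K] K :=
    (bdot y).comp (LinearMap.fst K (Fin n → K) (Fin n → K))
      - (bdot x).comp (LinearMap.snd K (Fin n → K) (Fin n → K)) with hldef
  have hlapp : ∀ uv : (Fin n → K) × (Fin n → K), ℓ uv = y ⬝ᵥ uv.1 - x ⬝ᵥ uv.2 := by
    intro uv
    rw [hldef]
    simp [bdot]
  obtain ⟨iy, hiy⟩ : ∃ i, y i ≠ 0 := Function.ne_iff.mp hy0
  obtain ⟨ix, hix⟩ : ∃ i, x i ≠ 0 := Function.ne_iff.mp hx0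
  have hlsurj : Function.Surjective ℓ := by
    intro c
    refine ⟨(c * (y iy)⁻¹) • ((Pi.single iy 1 : Fin n → K), (0 : Fin n → K)), ?_⟩
    rw [_root_.map_smul, hlapp]
    simp only [dotProduct_single, dotProduct_zero, mul_one, sub_zero,
      smul_eq_mul]
    field_simp
  have hkerl : finrank K (LinearMap.ker ℓ) + 1 = 2 * n := by
    have h := LinearMap.finrank_range_add_finrank_ker ℓ
    rw [LinearMap.range_eq_top.mpr hlsurj, finrank_top, Module.finrank_self,
      Module.finrank_prod, Module.finrank_pi, Fintype.card_fin] at h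
    omega
  -- ker ℓ is inside the range of Φ
  have hZrange : LinearMap.ker ℓ ≤ LinearMap.range Φ := by
    rintro ⟨u, w⟩ huw
    rw [LinearMap.mem_ker, hlapp] at huw
    have ht : y ⬝ᵥ u = x ⬝ᵥ w := by
      have := sub_eq_zero.mp huw
      simpa using this
    set z1 : Fin n → K := Pi.single ix (x ix)⁻¹ with hz1
    set w2 : Fin n → K := Pi.single iy (y iy)⁻¹ with hw2
    have hz1x : z1 ⬝ᵥ x = 1 := by
      rw [hz1, single_dotProduct]
      field_simp
    have hyw2 : y ⬝ᵥ w2 = 1 := by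
      rw [hw2, dotProduct_single]
      field_simp
    set X := Matrix.vecMulVec u z1 + Matrix.vecMulVec w2 w
      - (y ⬝ᵥ u) • Matrix.vecMulVec w2 z1 with hXdef
    refine ⟨X, ?_⟩
    have h1 : evR x X = u := by
      rw [hXdef, map_sub, map_add, _root_.map_smul, evR_apply, evR_apply, evR_apply,
        vecMulVec_mulVec', vecMulVec_mulVec', vecMulVec_mulVec', hz1x, one_smul,
        dotProduct_comm w x, ← ht]
      module
    have h2 : evL y X = w := by
      rw [hXdef, map_sub, map_add, _root_.map_smul, evL_apply, evL_apply, evL_apply,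
        vecMul_vecMulVec', vecMul_vecMulVec', vecMul_vecMulVec', hyw2, one_smul]
      module
    rw [hΦdef, LinearMap.prod_apply]
    rw [Prod.mk.injEq]
    exact ⟨h1, h2⟩
  have hkerΦ := finrank_ker_add_le (K := K) (E := Matrix (Fin n) (Fin n) K) Φ hZrange
  rw [hNdim] at hkerΦ
  have hVle : finrank K V ≤ n ^ 2 := by
    rw [← hNdim]; exact Submodule.finrank_le V
  -- final arithmetic
  set Q := n ^ 2 with hQ
  set F := finrank K V with hF
  set dL := finrank K L with hdL
  set dR := finrank K R with hdR
  set kΦ := finrank K (LinearMap.ker Φ) with hkΦ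
  set kl := finrank K (LinearMap.ker ℓ) with hkl
  set T1 := finrank K (Submodule.comap Φ (L.prod R)) with hT1
  set dLR := finrank K (Submodule.prod L R) with hdLR
  clear_value Q F dL dR kΦ kl T1 dLR
  omega
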